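/- Let C be a copula with C ≥ Π and h > 0 with 0 < B_h = ∫₀¹ (log y)² h(y) dy < ∞. Write C̄(y,t) = −log C(y^{1-t},y^t), C̄_n(y,t) = −log C̃_n(y^{1-t},y^t) for another function C̃_n with values in (0,1], A*(t) the minimizer of M_h(C,·) and Â_n(t) = B_h^{-1}∫₀¹ (C̄_n(y,t)/(−log y)) h^*(y) dy with h^*(y) = (log y)² h(y). Then, assuming all integrals are finite: M_h(C̃_n, Â_n) − M_h(C, A*) = 2∫₀¹∫₀¹ (C̄_n − C̄)(y,t)(C̄(y,t) − A*(t)(−log y)) h^*(y)/(log y)² dy dt + ∫₀¹∫₀¹ (C̄_n − C̄)²(y,t) h^*(y)/(log y)² dy dt − B_h ∫₀¹ (Â_n(t) − A*(t))² dt. -/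

import Mathlib

open MeasureTheory Set intervalIntegral

def IsCopula (C : ℝ → ℝ → ℝ) : Prop :=
  (∀ u ∈ Set.Icc (0:ℝ) 1, C u 0 = 0 ∧ C u 1 = u) ∧
  (∀ v ∈ Set.Icc (0:ℝ) 1, C 0 v = 0 ∧ C 1 v = v) ∧
  (∀ u₁ u₂ v₁ v₂ : ℝ, u₁ ∈ Set.Icc (0:ℝ) 1 → u₂ ∈ Set.Icc (0:ℝ) 1 →
    v₁ ∈ Set.Icc (0:ℝ) 1 → v₂ ∈ Set.Icc (0:ℝ) 1 → u₁ ≤ u₂ → v₁ ≤ v₂ →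
    0 ≤ C u₂ v₂ - C u₂ v₁ - C u₁ v₂ + C u₁ v₁)

noncomputable def Mdist (h : ℝ → ℝ) (D : ℝ → ℝ → ℝ) (A : ℝ → ℝ) : ℝ :=
  ∫ t in (0:ℝ)..1, ∫ y in (0:ℝ)..1,
    (Real.log (D (y ^ (1 - t)) (y ^ t)) - A t * Real.log y) ^ 2 * h y

theorem stmt18 (C : ℝ → ℝ → ℝ) (hC : IsCopula C)
    (hPi : ∀ u ∈ Set.Icc (0:ℝ) 1, ∀ v ∈ Set.Icc (0:ℝ) 1, u * v ≤ C u v)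
    (h : ℝ → ℝ) (hpos : ∀ y ∈ Set.Ioo (0:ℝ) 1, 0 < h y)
    (hstar : ℝ → ℝ) (hhstar : ∀ y, hstar y = (Real.log y) ^ 2 * h y)
    (Bh : ℝ) (hBh : Bh = ∫ y in (0:ℝ)..1, (Real.log y) ^ 2 * h y) (hBpos : 0 < Bh)
    (hBfin : IntervalIntegrable (fun y => (Real.log y) ^ 2 * h y) volume 0 1)
    (Cn : ℝ → ℝ → ℝ)
    (hCn : ∀ u ∈ Set.Icc (0:ℝ) 1, ∀ v ∈ Set.Icc (0:ℝ) 1, Cn u v ∈ Set.Ioc (0:ℝ) 1)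
    -- the "log-copula" functions and the two projections
    (Cb Cbn : ℝ → ℝ → ℝ)
    (hCb : ∀ y t, Cb y t = -Real.log (C (y ^ (1 - t)) (y ^ t)))
    (hCbn : ∀ y t, Cbn y t = -Real.log (Cn (y ^ (1 - t)) (y ^ t)))
    (Astar Ahat : ℝ → ℝ)
    (hAstar : ∀ t, Astar t =
      Bh⁻¹ * ∫ y in (0:ℝ)..1, (Cb y t / (-Real.log y)) * hstar y)
    (hAhat : ∀ t, Ahat t =
      Bh⁻¹ * ∫ y in (0:ℝ)..1, (Cbn y t / (-Real.log y)) * hstar y)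
    -- all integrals involved are assumed to be finite
    (hint1 : ∀ t ∈ Set.Icc (0:ℝ) 1, IntervalIntegrable
      (fun y => (Real.log (Cn (y ^ (1 - t)) (y ^ t)) - Ahat t * Real.log y) ^ 2 * h y)
      volume 0 1)
    (hint2 : ∀ t ∈ Set.Icc (0:ℝ) 1, IntervalIntegrable
      (fun y => (Real.log (C (y ^ (1 - t)) (y ^ t)) - Astar t * Real.log y) ^ 2 * h y)
      volume 0 1)
    (hint3 : ∀ t ∈ Set.Icc (0:ℝ) 1, IntervalIntegrable
      (fun y => (Cbn y t - Cb y t) * (Cb y t - Astar t * (-Real.log y)) *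
        (hstar y / (Real.log y) ^ 2)) volume 0 1)
    (hint4 : ∀ t ∈ Set.Icc (0:ℝ) 1, IntervalIntegrable
      (fun y => (Cbn y t - Cb y t) ^ 2 * (hstar y / (Real.log y) ^ 2)) volume 0 1)
    (hint5 : IntervalIntegrable (fun t =>
      ∫ y in (0:ℝ)..1, (Real.log (Cn (y ^ (1 - t)) (y ^ t)) - Ahat t * Real.log y) ^ 2 * h y)
      volume 0 1)
    (hint6 : IntervalIntegrable (fun t =>
      ∫ y in (0:ℝ)..1, (Real.log (C (y ^ (1 - t)) (y ^ t)) - Astar t * Real.log y) ^ 2 * h y)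
      volume 0 1)
    (hint7 : IntervalIntegrable (fun t =>
      ∫ y in (0:ℝ)..1, (Cbn y t - Cb y t) * (Cb y t - Astar t * (-Real.log y)) *
        (hstar y / (Real.log y) ^ 2)) volume 0 1)
    (hint8 : IntervalIntegrable (fun t =>
      ∫ y in (0:ℝ)..1, (Cbn y t - Cb y t) ^ 2 * (hstar y / (Real.log y) ^ 2)) volume 0 1)
    (hint9 : IntervalIntegrable (fun t => (Ahat t - Astar t) ^ 2) volume 0 1) :
    Mdist h Cn Ahat - Mdist h C Astar =
      2 * (∫ t in (0:ℝ)..1, ∫ y in (0:ℝ)..1,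
        (Cbn y t - Cb y t) * (Cb y t - Astar t * (-Real.log y)) *
          (hstar y / (Real.log y) ^ 2))
      + (∫ t in (0:ℝ)..1, ∫ y in (0:ℝ)..1,
          (Cbn y t - Cb y t) ^ 2 * (hstar y / (Real.log y) ^ 2))
      - Bh * ∫ t in (0:ℝ)..1, (Ahat t - Astar t) ^ 2 := by
  have hBne : Bh ≠ 0 := ne_of_gt hBpos
  -- a.e. the logarithm is nonzero
  have hLne : ∀ᵐ (y : ℝ) ∂volume, Real.log y ≠ 0 := by
    have hfin : volume ({0, 1, -1} : Set ℝ) = 0 :=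
      (((Set.finite_singleton (-1:ℝ)).insert 1).insert 0).measure_zero _
    rw [MeasureTheory.ae_iff]
    refine measure_mono_null ?_ hfin
    intro y hy
    simp only [Set.mem_setOf_eq, not_not] at hy
    rcases Real.log_eq_zero.mp hy with h'|h'|h' <;> simp [h']
  -- per-t key identity
  have key : ∀ t ∈ Set.Icc (0:ℝ) 1,
      (∫ y in (0:ℝ)..1, (Real.log (Cn (y ^ (1 - t)) (y ^ t)) - Ahat t * Real.log y) ^ 2 * h y)
        - (∫ y in (0:ℝ)..1, (Real.log (C (y ^ (1 - t)) (y ^ t)) - Astar t * Real.log y) ^ 2 * h y)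
      = 2 * (∫ y in (0:ℝ)..1, (Cbn y t - Cb y t) * (Cb y t - Astar t * (-Real.log y)) *
            (hstar y / (Real.log y) ^ 2))
        + (∫ y in (0:ℝ)..1, (Cbn y t - Cb y t) ^ 2 * (hstar y / (Real.log y) ^ 2))
        - Bh * (Ahat t - Astar t) ^ 2 := by
    intro t ht
    -- pointwise identity where log y ≠ 0
    have hpt : ∀ y : ℝ, Real.log y ≠ 0 →
        (Real.log (Cn (y ^ (1 - t)) (y ^ t)) - Ahat t * Real.log y) ^ 2 * h y
          - (Real.log (C (y ^ (1 - t)) (y ^ t)) - Astar t * Real.log y) ^ 2 * h y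
          - 2 * ((Cbn y t - Cb y t) * (Cb y t - Astar t * (-Real.log y)) *
              (hstar y / (Real.log y) ^ 2))
          - (Cbn y t - Cb y t) ^ 2 * (hstar y / (Real.log y) ^ 2)
        = (Ahat t - Astar t) *
            (((Ahat t + Astar t) * (Real.log y) ^ 2
              - 2 * Real.log (Cn (y ^ (1 - t)) (y ^ t)) * Real.log y) * h y) := by
      intro y hL
      have hdiv : hstar y / (Real.log y) ^ 2 = h y := by
        rw [hhstar]; field_simp
      rw [hCb, hCbn, hdiv]
      ring
    -- integral identity via a.e. congruence
    have h1 : (∫ y in (0:ℝ)..1,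
          ((Real.log (Cn (y ^ (1 - t)) (y ^ t)) - Ahat t * Real.log y) ^ 2 * h y
            - (Real.log (C (y ^ (1 - t)) (y ^ t)) - Astar t * Real.log y) ^ 2 * h y
            - 2 * ((Cbn y t - Cb y t) * (Cb y t - Astar t * (-Real.log y)) *
                (hstar y / (Real.log y) ^ 2))
            - (Cbn y t - Cb y t) ^ 2 * (hstar y / (Real.log y) ^ 2)))
        = ∫ y in (0:ℝ)..1, (Ahat t - Astar t) *
            (((Ahat t + Astar t) * (Real.log y) ^ 2
              - 2 * Real.log (Cn (y ^ (1 - t)) (y ^ t)) * Real.log y) * h y) := by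
      refine intervalIntegral.integral_congr_ae ?_
      filter_upwards [hLne] with y hy _ using hpt y hy
    have hsplit : (∫ y in (0:ℝ)..1,
          ((Real.log (Cn (y ^ (1 - t)) (y ^ t)) - Ahat t * Real.log y) ^ 2 * h y
            - (Real.log (C (y ^ (1 - t)) (y ^ t)) - Astar t * Real.log y) ^ 2 * h y
            - 2 * ((Cbn y t - Cb y t) * (Cb y t - Astar t * (-Real.log y)) *
                (hstar y / (Real.log y) ^ 2))
            - (Cbn y t - Cb y t) ^ 2 * (hstar y / (Real.log y) ^ 2)))
        = (∫ y in (0:ℝ)..1, (Real.log (Cn (y ^ (1 - t)) (y ^ t)) - Ahat t * Real.log y) ^ 2 * h y)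
          - (∫ y in (0:ℝ)..1, (Real.log (C (y ^ (1 - t)) (y ^ t)) - Astar t * Real.log y) ^ 2 * h y)
          - 2 * (∫ y in (0:ℝ)..1, (Cbn y t - Cb y t) * (Cb y t - Astar t * (-Real.log y)) *
              (hstar y / (Real.log y) ^ 2))
          - (∫ y in (0:ℝ)..1, (Cbn y t - Cb y t) ^ 2 * (hstar y / (Real.log y) ^ 2)) := by
      rw [intervalIntegral.integral_sub (((hint1 t ht).sub (hint2 t ht)).sub
            ((hint3 t ht).const_mul 2)) (hint4 t ht),
        intervalIntegral.integral_sub ((hint1 t ht).sub (hint2 t ht))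
            ((hint3 t ht).const_mul 2),
        intervalIntegral.integral_sub (hint1 t ht) (hint2 t ht),
        intervalIntegral.integral_const_mul]
    -- Step B : the remainder integral
    have stepB : (∫ y in (0:ℝ)..1, (Ahat t - Astar t) *
            (((Ahat t + Astar t) * (Real.log y) ^ 2
              - 2 * Real.log (Cn (y ^ (1 - t)) (y ^ t)) * Real.log y) * h y))
        = -(Bh * (Ahat t - Astar t) ^ 2) := by
      rw [intervalIntegral.integral_const_mul]
      rcases eq_or_ne (Ahat t) (Astar t) with hba | hba
      · simp [hba]
      · have hsub : Ahat t - Astar t ≠ 0 := sub_ne_zero.mpr hba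
        -- the inner function is interval integrable
        have hcs : IntervalIntegrable (fun y => (Ahat t - Astar t) *
            (((Ahat t + Astar t) * (Real.log y) ^ 2
              - 2 * Real.log (Cn (y ^ (1 - t)) (y ^ t)) * Real.log y) * h y)) volume 0 1 := by
          refine ((((hint1 t ht).sub (hint2 t ht)).sub
            ((hint3 t ht).const_mul 2)).sub (hint4 t ht)).congr_ae ?_
          refine MeasureTheory.ae_restrict_of_ae ?_
          filter_upwards [hLne] with y hy using hpt y hy
        have hsint : IntervalIntegrable (fun y =>
            ((Ahat t + Astar t) * (Real.log y) ^ 2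
              - 2 * Real.log (Cn (y ^ (1 - t)) (y ^ t)) * Real.log y) * h y) volume 0 1 := by
          have h2 := hcs.const_mul (Ahat t - Astar t)⁻¹
          have heq : (fun y => (Ahat t - Astar t)⁻¹ * ((Ahat t - Astar t) *
              (((Ahat t + Astar t) * (Real.log y) ^ 2
                - 2 * Real.log (Cn (y ^ (1 - t)) (y ^ t)) * Real.log y) * h y)))
              = fun y => ((Ahat t + Astar t) * (Real.log y) ^ 2
                - 2 * Real.log (Cn (y ^ (1 - t)) (y ^ t)) * Real.log y) * h y := by
            funext y; field_simp
          rwa [heq] at h2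
        have hq : IntervalIntegrable (fun y =>
            Real.log (Cn (y ^ (1 - t)) (y ^ t)) * Real.log y * h y) volume 0 1 := by
          have h2 := ((hBfin.const_mul (Ahat t + Astar t)).sub hsint).const_mul (1/2 : ℝ)
          have heq : (fun y => (1/2 : ℝ) * ((Ahat t + Astar t) * ((Real.log y) ^ 2 * h y)
                - ((Ahat t + Astar t) * (Real.log y) ^ 2
                  - 2 * Real.log (Cn (y ^ (1 - t)) (y ^ t)) * Real.log y) * h y))
              = fun y => Real.log (Cn (y ^ (1 - t)) (y ^ t)) * Real.log y * h y := by
            funext y; ring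
          rwa [heq] at h2
        have hqval : (∫ y in (0:ℝ)..1,
            Real.log (Cn (y ^ (1 - t)) (y ^ t)) * Real.log y * h y) = Bh * Ahat t := by
          have hcongr : (∫ y in (0:ℝ)..1,
              Real.log (Cn (y ^ (1 - t)) (y ^ t)) * Real.log y * h y)
              = ∫ y in (0:ℝ)..1, (Cbn y t / (-Real.log y)) * hstar y := by
            refine intervalIntegral.integral_congr_ae ?_
            filter_upwards [hLne] with y hy _
            rw [hCbn, hhstar]
            field_simp
          rw [hcongr, hAhat t, ← mul_assoc, mul_inv_cancel₀ hBne, one_mul]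
        have hsval : (∫ y in (0:ℝ)..1,
            ((Ahat t + Astar t) * (Real.log y) ^ 2
              - 2 * Real.log (Cn (y ^ (1 - t)) (y ^ t)) * Real.log y) * h y)
            = (Ahat t + Astar t) * Bh - 2 * (Bh * Ahat t) := by
          have hcongr2 : (∫ y in (0:ℝ)..1,
              ((Ahat t + Astar t) * (Real.log y) ^ 2
                - 2 * Real.log (Cn (y ^ (1 - t)) (y ^ t)) * Real.log y) * h y)
              = ∫ y in (0:ℝ)..1, ((Ahat t + Astar t) * ((Real.log y) ^ 2 * h y)
                  - 2 * (Real.log (Cn (y ^ (1 - t)) (y ^ t)) * Real.log y * h y)) := by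
            refine intervalIntegral.integral_congr (fun y _ => ?_)
            ring
          rw [hcongr2, intervalIntegral.integral_sub (hBfin.const_mul (Ahat t + Astar t))
              (hq.const_mul 2), intervalIntegral.integral_const_mul,
            intervalIntegral.integral_const_mul, hqval, ← hBh]
        rw [hsval]; ring
    have := (hsplit.symm.trans h1).trans stepB
    linarith [this]
  -- outer step
  have hout : Mdist h Cn Ahat - Mdist h C Astar
      = ∫ t in (0:ℝ)..1,
          (2 * (∫ y in (0:ℝ)..1, (Cbn y t - Cb y t) * (Cb y t - Astar t * (-Real.log y)) *
              (hstar y / (Real.log y) ^ 2))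
            + (∫ y in (0:ℝ)..1, (Cbn y t - Cb y t) ^ 2 * (hstar y / (Real.log y) ^ 2))
            - Bh * (Ahat t - Astar t) ^ 2) := by
    unfold Mdist
    rw [← intervalIntegral.integral_sub hint5 hint6]
    refine intervalIntegral.integral_congr (fun t ht => ?_)
    have ht' : t ∈ Set.Icc (0:ℝ) 1 := by
      rwa [Set.uIcc_of_le (by norm_num : (0:ℝ) ≤ 1)] at ht
    exact key t ht'
  rw [hout,
    intervalIntegral.integral_sub ((hint7.const_mul 2).add hint8) (hint9.const_mul Bh),
    intervalIntegral.integral_add (hint7.const_mul 2) hint8,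
    intervalIntegral.integral_const_mul, intervalIntegral.integral_const_mul]
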